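/- Let P be a proper finite propositional logic program and A a set of atoms. Then P has an A-based stable model if and only if P(A) has an A-based stable model M = A ∪ {a} such that a ∉ {a_r : r ∈ P′(A)}. -/
import Mathlib


open scoped Classical

noncomputable section

/-- A propositional logic program rule: a head atom, a finite positive body and a
finite negative body. -/
structure LPRule (α : Type) where
  head : α
  pos : Finset α
  neg : Finset α
deriving DecidableEq

/-- A logic program is a finite set of rules. -/
abbrev LProgram (α : Type) := Finset (LPRule α)

variable {α : Type} [DecidableEq α]

/-- `horn r`: the Horn rule with the same head and positive body as `r`
and empty negative body. -/
def LPRule.horn (r : LPRule α) : LPRule α := ⟨r.head, r.pos, ∅⟩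

/-- A rule `r` is proper if `h(r) ∉ b⁺(r)` and `b⁺(r) ∩ b⁻(r) = ∅`. -/
def LPRule.proper (r : LPRule α) : Prop := r.head ∉ r.pos ∧ r.pos ∩ r.neg = ∅

/-- `At(P)`: the set of atoms occurring in `P`. -/
def atomsP (P : LProgram α) : Finset α := P.sup (fun r => insert r.head (r.pos ∪ r.neg))

/-- `h(P)`: the set of heads of rules of `P`. -/
def headsP (P : LProgram α) : Finset α := P.image LPRule.head

/-- `Neg(P)`: the set of atoms occurring negated in `P`. -/
def negP (P : LProgram α) : Finset α := P.sup LPRule.neg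

/-- The least model of a (Horn) program `Q`, given as a set of rules (negative bodies
are ignored; Horn rules have empty negative bodies): the least set `M` of atoms such
that `h(r) ∈ M` whenever `r ∈ Q` and `b⁺(r) ⊆ M`. -/
def LM (Q : Set (LPRule α)) : Set α :=
  ⋂₀ {M : Set α | ∀ r ∈ Q, (↑r.pos : Set α) ⊆ M → r.head ∈ M}

/-- The reduct `P^S`: delete every rule whose negative body meets `S` and remove the
negative bodies of the remaining rules. -/
def reduct (P : LProgram α) (S : Set α) : Set (LPRule α) :=
  LPRule.horn '' {r | r ∈ P ∧ (↑r.neg : Set α) ∩ S = ∅}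

/-- `M` is a stable model of `P` if `M = LM (P^M)`. -/
def isStable (P : LProgram α) (M : Set α) : Prop :=
  M = LM (reduct P M)

/-- `P(A)`: the rules `r` of `P` with `b⁻(r) ∩ A = ∅` and `b⁺(r) ⊆ A`. -/
def progA (P : LProgram α) (A : Set α) : LProgram α :=
  P.filter (fun r => (↑r.pos : Set α) ⊆ A ∧ (↑r.neg : Set α) ∩ A = ∅)

/-- `M` is an `A`-based stable model of `P`: `M` is a stable model of `P` of the form
`A ∪ {a}` for some atom `a ∉ A`, and `M ⊆ LM (P(A)^M)`. -/
def isABased (P : LProgram α) (A M : Set α) : Prop :=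
  isStable P M ∧ ∃ a, a ∉ A ∧ M = A ∪ {a} ∧ M ⊆ LM (reduct (progA P A) M)

lemma LM_subset {Q : Set (LPRule α)} {M : Set α}
    (hM : ∀ r ∈ Q, (↑r.pos : Set α) ⊆ M → r.head ∈ M) : LM Q ⊆ M :=
  Set.sInter_subset_of_mem hM

lemma LM_closed {Q : Set (LPRule α)} {r : LPRule α} (hr : r ∈ Q)
    (hpos : (↑r.pos : Set α) ⊆ LM Q) : r.head ∈ LM Q := by
  simp only [LM, Set.mem_sInter]
  intro M hM
  exact hM r hr (hpos.trans (Set.sInter_subset_of_mem hM))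

lemma LM_mono {Q Q' : Set (LPRule α)} (h : Q ⊆ Q') : LM Q ⊆ LM Q' :=
  Set.sInter_subset_sInter (fun M hM r hr hp => hM r (h hr) hp)

lemma progA_idem (P : LProgram α) (A : Set α) : progA (progA P A) A = progA P A := by
  ext r; simp only [progA, Finset.mem_filter]; tauto

lemma reduct_mono {P P' : LProgram α} (h : P ⊆ P') (S : Set α) :
    reduct P S ⊆ reduct P' S := by
  rintro _ ⟨r, ⟨hr, hc⟩, rfl⟩
  exact ⟨r, ⟨h hr, hc⟩, rfl⟩

/-- a proper program `P` has an `A`-based stable model iff `P(A)` has an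
`A`-based stable model `M = A ∪ {a}` such that `a ∉ {a_r : r ∈ P'(A)}`, where `P'(A)`
consists of the rules `r` of `P` with `b⁻(r) ∩ A = ∅`, `h(r) ∉ A` and `b⁺(r) \ A`
a singleton, whose unique element is `a_r`. -/
theorem abased_iff_abased_progA (P : LProgram α) (hP : ∀ r ∈ P, r.proper)
    (A : Set α) :
    (∃ M : Set α, isABased P A M) ↔
      (∃ a, a ∉ A ∧ isABased (progA P A) A (A ∪ {a}) ∧
        ∀ r ∈ P, (↑r.neg : Set α) ∩ A = ∅ → r.head ∉ A →
          (↑r.pos : Set α) \ A ≠ {a}) := by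
  constructor
  · rintro ⟨M, hstab, a, haA, rfl, hMsub⟩
    have hsubP : progA P A ⊆ P := Finset.filter_subset _ _
    have h1 : LM (reduct (progA P A) (A ∪ {a})) ⊆ A ∪ {a} := by
      have := LM_mono (reduct_mono hsubP (A ∪ {a}))
      rw [isStable] at hstab
      exact this.trans hstab.ge
    have hstab' : isStable (progA P A) (A ∪ {a}) :=
      (Set.Subset.antisymm hMsub h1)
    refine ⟨a, haA, ⟨hstab', a, haA, rfl, ?_⟩, ?_⟩
    · rw [progA_idem]; exact hMsub
    · intro r hrP hnegA hheadA hposA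
      have hproper := hP r hrP
      have hapos : a ∈ (↑r.pos : Set α) := by
        have : a ∈ (↑r.pos : Set α) \ A := hposA ▸ rfl
        exact this.1
      have haneg : a ∉ (↑r.neg : Set α) := by
        intro h
        have : a ∈ r.pos ∩ r.neg := Finset.mem_inter.mpr ⟨hapos, h⟩
        rw [hproper.2] at this
        exact absurd this (Finset.notMem_empty a)
      have hnegM : (↑r.neg : Set α) ∩ (A ∪ {a}) = ∅ := by
        ext x
        simp only [Set.mem_inter_iff, Set.mem_union, Set.mem_singleton_iff,
          Set.mem_empty_iff_false, iff_false, not_and, not_or]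
        intro hx
        constructor
        · intro hxA
          exact absurd (Set.mem_inter hx hxA)
            (by rw [hnegA]; exact Set.notMem_empty x)
        · rintro rfl; exact haneg hx
      have hposM : (↑r.pos : Set α) ⊆ A ∪ {a} := by
        intro x hx
        by_cases hxA : x ∈ A
        · exact Or.inl hxA
        · have : x ∈ (↑r.pos : Set α) \ A := ⟨hx, hxA⟩
          rw [hposA] at this
          exact Or.inr this
      have hmem : r.horn ∈ reduct P (A ∪ {a}) := ⟨r, ⟨hrP, hnegM⟩, rfl⟩
      rw [isStable] at hstab
      have h2 := LM_closed hmem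
        (show (↑r.horn.pos : Set α) ⊆ LM (reduct P (A ∪ {a})) from hstab ▸ hposM)
      have h3 : r.head ∈ A ∪ {a} := by rw [hstab]; exact h2
      rcases h3 with h | h
      · exact hheadA h
      · rw [Set.mem_singleton_iff] at h
        exact hproper.1 (h ▸ hapos)
  · rintro ⟨a, haA, ⟨hstabA, a', ha'A, heq, hsub⟩, hnor⟩
    rw [progA_idem] at hsub
    rw [isStable] at hstabA
    have hsubP : progA P A ⊆ P := Finset.filter_subset _ _
    have hstabP : isStable P (A ∪ {a}) := by
      rw [isStable]
      apply Set.Subset.antisymm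
      · exact hstabA.le.trans (LM_mono (reduct_mono hsubP (A ∪ {a})))
      · apply LM_subset
        rintro _ ⟨r, ⟨hrP, hnegM⟩, rfl⟩ hpos
        simp only [LPRule.horn] at hpos ⊢
        have hnegA : (↑r.neg : Set α) ∩ A = ∅ := by
          ext x
          simp only [Set.mem_inter_iff, Set.mem_empty_iff_false, iff_false, not_and]
          intro hx hxA
          exact absurd (Set.mem_inter hx (Or.inl hxA))
            (by rw [hnegM]; exact Set.notMem_empty x)
        by_cases hposA : (↑r.pos : Set α) ⊆ A
        · have hr' : r ∈ progA P A := Finset.mem_filter.mpr ⟨hrP, hposA, hnegA⟩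
          have hmem : r.horn ∈ reduct (progA P A) (A ∪ {a}) := ⟨r, ⟨hr', hnegM⟩, rfl⟩
          have h2 := LM_closed hmem
            (show (↑r.horn.pos : Set α) ⊆ LM (reduct (progA P A) (A ∪ {a}))
              from hstabA ▸ hpos)
          rw [hstabA]
          exact h2
        · obtain ⟨x, hx, hxA⟩ := Set.not_subset.mp hposA
          have hxa : x = a := by
            rcases hpos hx with h | h
            · exact absurd h hxA
            · exact h
          subst hxa
          have hdiff : (↑r.pos : Set α) \ A = {x} := by
            apply Set.Subset.antisymm
            · rintro y ⟨hy, hyA⟩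
              rcases hpos hy with h | h
              · exact absurd h hyA
              · exact h
            · rintro y rfl; exact ⟨hx, hxA⟩
          by_cases hhead : r.head ∈ A
          · exact Or.inl hhead
          · exact absurd hdiff (hnor r hrP hnegA hhead)
    exact ⟨A ∪ {a}, hstabP, a, haA, rfl, hstabA.le⟩
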